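/- Let q = p₁^{a₁} ⋯ p_h^{a_h} with p₁, …, p_h distinct primes and a_j ≥ 1, let C = p₁^{⌈a₁/3⌉} ⋯ p_h^{⌈a_h/3⌉}, let χ be a Dirichlet character modulo q, and let w be any integer. Then there exist rational numbers α and β such that for every integer k, χ(1 + w C k) = exp(2πi (α k + β k²)). -/

import Mathlib

open Complex

/-- exp of 2πi times a rational. -/
noncomputable def ratE (x : ℚ) : ℂ := Complex.exp (2 * (Real.pi : ℂ) * Complex.I * (x : ℂ))

lemma ratE_zero : ratE 0 = 1 := by simp [ratE]

lemma ratE_eq_of_sub_int {x y : ℚ} (m : ℤ) (hm : x - y = m) : ratE x = ratE y := by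
  have hx : x = y + (m : ℚ) := by linarith [hm]
  rw [ratE, ratE, hx]
  push_cast
  rw [mul_add, Complex.exp_add]
  have : Complex.exp (2 * (Real.pi : ℂ) * Complex.I * (m : ℂ)) = 1 := by
    rw [mul_comm]; exact Complex.exp_int_mul_two_pi_mul_I m
  rw [this, mul_one]

lemma ratE_pow (x : ℚ) (n : ℕ) : (ratE x) ^ n = ratE (n * x) := by
  rw [ratE, ratE, ← Complex.exp_nat_mul]
  push_cast; ring_nf

lemma ratE_mul_ratE (x y : ℚ) : ratE x * ratE y = ratE (x + y) := by
  rw [ratE, ratE, ratE, ← Complex.exp_add]; push_cast; ring_nf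

/-- Any root of unity in ℂ is `ratE` of some rational. -/
lemma exists_ratE {z : ℂ} {n : ℕ} (hn : n ≠ 0) (hz : z ^ n = 1) : ∃ r : ℚ, z = ratE r := by
  have : NeZero n := ⟨hn⟩
  obtain ⟨i, hi, hiz⟩ := (Complex.isPrimitiveRoot_exp n hn).eq_pow_of_pow_eq_one hz
  refine ⟨(i : ℚ) / (n : ℚ), ?_⟩
  rw [← hiz, ← Complex.exp_nat_mul, ratE]
  congr 1
  have hn' : (n : ℂ) ≠ 0 := Nat.cast_ne_zero.mpr hn
  push_cast
  field_simp

/-- Binomial-type identity: `(1+t²)^K = 1 + K t²` when `t³ = 0`. -/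
lemma one_add_sq_pow {R : Type*} [CommRing R] {t : R} (ht : t ^ 3 = 0) (K : ℕ) :
    (1 + t ^ 2) ^ K = 1 + (K : R) * t ^ 2 := by
  induction K with
  | zero => simp
  | succ K ih =>
    rw [pow_succ, ih]
    push_cast
    linear_combination ((K : R) * t) * ht

/-- `(1+t)^K = (1 + K t) * (1+t²)^(K choose 2)` when `t³ = 0`. -/
lemma one_add_pow {R : Type*} [CommRing R] {t : R} (ht : t ^ 3 = 0) (K : ℕ) :
    (1 + t) ^ K = (1 + (K : R) * t) * (1 + t ^ 2) ^ (K.choose 2) := by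
  induction K with
  | zero => simp
  | succ K ih =>
    rw [pow_succ, ih, Nat.choose_succ_succ' K 1, Nat.choose_one_right, pow_add,
      one_add_sq_pow ht K]
    push_cast
    linear_combination (-(K:R)^2 - (K:R)) * (1 + t ^ 2) ^ K.choose 2 * ht

/-- **Character values along the progression `1 + wCℤ` are quadratic exponentials.**
Let `q = p₁^{a₁} ⋯ p_h^{a_h}` with distinct primes `p_j` and `a_j ≥ 1`, let
`C = p₁^{⌈a₁/3⌉} ⋯ p_h^{⌈a_h/3⌉}`, `χ` a Dirichlet character mod `q`, and `w ∈ ℤ`.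
Then there are rationals `α, β` with `χ(1 + wCk) = exp(2πi (α k + β k²))` for all `k ∈ ℤ`. -/
theorem stmt10 (h : ℕ) (p a : Fin h → ℕ) (hp : ∀ j, (p j).Prime)
    (hdist : Function.Injective p) (ha : ∀ j, 1 ≤ a j)
    (b : Fin h → ℕ) (hb : ∀ j, ((b j : ℤ) = ⌈(a j : ℚ) / 3⌉))
    (q C : ℕ) (hq : q = ∏ j, p j ^ a j) (hC : C = ∏ j, p j ^ b j)
    (χ : DirichletCharacter ℂ q) (w : ℤ) :
    ∃ α β : ℚ, ∀ k : ℤ,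
      χ ((1 + w * (C : ℤ) * k : ℤ) : ZMod q) =
        Complex.exp (2 * (Real.pi : ℂ) * Complex.I * ((α : ℂ) * (k : ℂ) + (β : ℂ) * (k : ℂ) ^ 2)) := by
  -- q ≠ 0
  have hq0 : q ≠ 0 := by
    rw [hq]
    exact (Finset.prod_pos fun j _ => pow_pos (hp j).pos _).ne'
  have : NeZero q := ⟨hq0⟩
  -- q ∣ C³
  have hqC3 : q ∣ C ^ 3 := by
    rw [hq, hC, ← Finset.prod_pow]
    refine Finset.prod_dvd_prod_of_dvd _ _ fun j _ => ?_
    rw [← pow_mul]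
    refine pow_dvd_pow _ ?_
    have h1 : ((a j : ℚ) / 3) ≤ ((b j : ℤ) : ℚ) := by rw [hb j]; exact Int.le_ceil _
    have h2 : (a j : ℚ) ≤ (b j : ℚ) * 3 := by push_cast at h1; linarith
    exact_mod_cast h2
  set t : ZMod q := (w : ZMod q) * (C : ZMod q) with ht_def
  have ht : t ^ 3 = 0 := by
    have hC3 : ((C : ZMod q)) ^ 3 = 0 := by
      have : ((C ^ 3 : ℕ) : ZMod q) = 0 := (ZMod.natCast_eq_zero_iff _ _).mpr hqC3
      simpa using this
    rw [ht_def, mul_pow, hC3, mul_zero]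
  -- 1 + t and 1 + t² are units
  have hu1 : IsUnit (1 + t) := by
    refine IsUnit.of_mul_eq_one (1 - t + t ^ 2) ?_
    linear_combination ht
  have hu2 : IsUnit (1 + t ^ 2) := by
    refine IsUnit.of_mul_eq_one (1 - t ^ 2) ?_
    linear_combination (-(t : ZMod q)) * ht
  set n := Fintype.card (ZMod q)ˣ with hn_def
  have hn0 : n ≠ 0 := Fintype.card_ne_zero
  -- χ values at units are roots of unity
  have hroot : ∀ x : ZMod q, IsUnit x → (χ x) ^ n = 1 := by
    intro x hx
    obtain ⟨u, rfl⟩ := hx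
    rw [← map_pow, ← Units.val_pow_eq_pow_val, pow_card_eq_one, Units.val_one, map_one]
  obtain ⟨r, hr⟩ := exists_ratE hn0 (hroot _ hu1)
  obtain ⟨s, hs⟩ := exists_ratE hn0 (hroot _ hu2)
  refine ⟨r + s / 2, -(s / 2), fun k => ?_⟩
  set α : ℚ := r + s / 2 with hα
  set β : ℚ := -(s / 2) with hβ
  -- key formula for natural K
  have key : ∀ K : ℕ, χ (1 + (K : ZMod q) * t) = ratE (α * K + β * K ^ 2) := by
    intro K
    have h1 := congrArg χ (one_add_pow ht K)
    rw [map_pow, map_mul, map_pow, hr, hs, ratE_pow, ratE_pow] at h1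
    have h3 := congrArg (· * ratE (-((K.choose 2 : ℚ) * s))) h1
    simp only [mul_assoc, ratE_mul_ratE, add_neg_cancel, ratE_zero, mul_one] at h3
    rw [h3.symm]
    congr 1
    rw [Nat.cast_choose_two]
    field_simp [hα, hβ]
    ring
  -- now reduce an arbitrary integer k to a natural number K
  set M : ℕ := q * (α.den * β.den) with hM
  have hM0 : (0 : ℤ) < (M : ℤ) := by
    have : 0 < M := Nat.mul_pos (Nat.pos_of_ne_zero hq0) (Nat.mul_pos α.den_pos β.den_pos)
    exact_mod_cast this
  set K : ℕ := (k % (M : ℤ)).toNat with hK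
  have hKk : (K : ℤ) = k % (M : ℤ) := Int.toNat_of_nonneg (Int.emod_nonneg k hM0.ne')
  have hMdvd : (M : ℤ) ∣ (K : ℤ) - k := by
    rw [hKk, Int.emod_def]
    exact ⟨-(k / (M : ℤ)), by ring⟩
  -- the character value only depends on k mod q
  have hcast : ((1 + w * (C : ℤ) * k : ℤ) : ZMod q) = 1 + (K : ZMod q) * t := by
    have hqM : (q : ℤ) ∣ (M : ℤ) := ⟨(α.den * β.den : ℕ), by push_cast [hM]; ring⟩
    have hmod : (1 + w * (C : ℤ) * k) ≡ (1 + w * (C : ℤ) * K) [ZMOD (q : ℤ)] := by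
      have hKk' : (K : ℤ) ≡ k [ZMOD (q : ℤ)] :=
        (Int.modEq_iff_dvd.mpr (hqM.trans hMdvd)).symm
      exact ((Int.ModEq.mul_left _ hKk').add_left 1).symm
    have := (ZMod.intCast_eq_intCast_iff _ _ _).mpr hmod
    rw [this]
    push_cast
    ring
  rw [hcast, key K]
  -- exp argument only depends on k modulo denominators
  have hαden : ((α.den : ℤ)) ∣ (K : ℤ) - k :=
    dvd_trans ⟨(q * β.den : ℕ), by push_cast [hM]; ring⟩ hMdvd
  have hβden : ((β.den : ℤ)) ∣ (K : ℤ) - k :=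
    dvd_trans ⟨(q * α.den : ℕ), by push_cast [hM]; ring⟩ hMdvd
  obtain ⟨c₁, hc₁⟩ := hαden
  obtain ⟨c₂, hc₂⟩ := hβden
  have hsub : ratE (α * K + β * K ^ 2) = ratE (α * k + β * k ^ 2) := by
    refine ratE_eq_of_sub_int (α.num * c₁ + β.num * c₂ * ((K : ℤ) + k)) ?_
    have hc₁q : ((K : ℚ)) - (k : ℚ) = (α.den : ℚ) * (c₁ : ℚ) := by exact_mod_cast hc₁
    have hc₂q : ((K : ℚ)) - (k : ℚ) = (β.den : ℚ) * (c₂ : ℚ) := by exact_mod_cast hc₂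
    have h1 : α * (α.den : ℚ) = (α.num : ℚ) := Rat.mul_den_eq_num α
    have h2 : β * (β.den : ℚ) = (β.num : ℚ) := Rat.mul_den_eq_num β
    push_cast
    linear_combination α * hc₁q + (c₁ : ℚ) * h1 + (β * ((K : ℚ) + (k : ℚ))) * hc₂q
      + ((c₂ : ℚ) * ((K : ℚ) + (k : ℚ))) * h2
  rw [hsub, ratE]
  push_cast
  ring_nf
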